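/- Let r ≥ 0 and s be integers, and for 0 ≤ i ≤ r define c_i(t) = (−1)^i · binom(r,i) · (cosh t)^{i+s}, with the convention c_{r+1} ≡ 0. Then for every t > 0 and every i with 0 ≤ i ≤ r, the functions c_i satisfy both of the following equations: (i) −(1/2)·c_i'(t) + ((i+s)/2)·tanh(t)·c_i(t) + (r−i)·coth(t)·c_i(t) + (i+1)·(sinh t)^{−1}·c_{i+1}(t) = 0; and (ii) (r−i)·[ (1/2)·c_i'(t) − ((i+s)/2)·tanh(t)·c_i(t) + (i+1)·coth(t)·c_i(t) ] + (i+1)²·(sinh t)^{−1}·c_{i+1}(t) = 0. -/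

import Mathlib

/-- The radial Schmid-operator equations for the antiholomorphic discrete series of
`SU(2,1)`: the functions `c_i(t) = (−1)^i C(r,i) (cosh t)^{i+s}` (for `0 ≤ i ≤ r`,
with `c_{r+1} ≡ 0`) satisfy `P⁺_τ∘∇ᴸ₊φ = 0` and `P⁻_τ∘∇ᴸ₊φ = 0`. -/
theorem stmt_10 (r : ℕ) (s : ℤ) (c : ℤ → ℝ → ℝ)
    (hc : ∀ i : ℤ, ∀ t : ℝ,
      c i t = if 0 ≤ i ∧ i ≤ (r : ℤ) then
        (-1 : ℝ) ^ i.toNat * (r.choose i.toNat : ℝ) * Real.cosh t ^ (i + s) else 0) :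
    ∀ t : ℝ, 0 < t → ∀ i : ℤ, 0 ≤ i → i ≤ (r : ℤ) →
      (-(1 / 2) * deriv (c i) t + ((i : ℝ) + (s : ℝ)) / 2 * Real.tanh t * c i t
          + ((r : ℝ) - (i : ℝ)) * (Real.cosh t / Real.sinh t) * c i t
          + ((i : ℝ) + 1) * (Real.sinh t)⁻¹ * c (i + 1) t = 0) ∧
      (((r : ℝ) - (i : ℝ)) * ((1 / 2) * deriv (c i) t
          - ((i : ℝ) + (s : ℝ)) / 2 * Real.tanh t * c i t
          + ((i : ℝ) + 1) * (Real.cosh t / Real.sinh t) * c i t)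
          + ((i : ℝ) + 1) ^ 2 * (Real.sinh t)⁻¹ * c (i + 1) t = 0) := by
  intro t ht i h0 hr
  have hcosh : 0 < Real.cosh t := Real.cosh_pos t
  have hsinh : 0 < Real.sinh t := Real.sinh_pos_iff.mpr ht
  obtain ⟨n, rfl⟩ : ∃ n : ℕ, i = (n : ℤ) := ⟨i.toNat, (Int.toNat_of_nonneg h0).symm⟩
  have hnr : n ≤ r := by exact_mod_cast hr
  set A : ℝ := (-1 : ℝ) ^ n * (r.choose n : ℝ) with hA
  -- the function c n
  have hfun : c (n : ℤ) = fun u => A * Real.cosh u ^ ((n : ℤ) + s) := by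
    funext u
    rw [hc]
    simp [h0, hr, hA]
  -- derivative
  have hd : deriv (c (n : ℤ)) t
      = A * ((((n : ℤ) + s : ℤ) : ℝ) * Real.cosh t ^ ((n : ℤ) + s - 1) * Real.sinh t) := by
    rw [hfun]
    have h1 : HasDerivAt (fun u : ℝ => Real.cosh u ^ ((n : ℤ) + s))
        ((((n : ℤ) + s : ℤ) : ℝ) * Real.cosh t ^ ((n : ℤ) + s - 1) * Real.sinh t) t := by
      have := (hasDerivAt_zpow ((n : ℤ) + s) (Real.cosh t) (Or.inl hcosh.ne')).comp t
        (Real.hasDerivAt_cosh t)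
      simpa [mul_comm, mul_assoc, Function.comp_def] using this
    exact (h1.const_mul A).deriv
  -- values
  have hct : c (n : ℤ) t = A * Real.cosh t ^ ((n : ℤ) + s) := by rw [hfun]
  -- zpow relations
  set X : ℝ := Real.cosh t ^ ((n : ℤ) + s - 1) with hX
  have e1 : Real.cosh t ^ ((n : ℤ) + s) = X * Real.cosh t := by
    rw [hX, ← zpow_add_one₀ hcosh.ne']; ring_nf
  have e2 : Real.cosh t ^ ((n : ℤ) + 1 + s) = X * Real.cosh t * Real.cosh t := by
    rw [hX, ← zpow_add_one₀ hcosh.ne', ← zpow_add_one₀ hcosh.ne']; ring_nf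
  have htanh := Real.tanh_eq_sinh_div_cosh t
  -- binomial identity as reals
  have hbin : ((r.choose (n + 1) : ℝ)) * ((n : ℝ) + 1) = (r.choose n : ℝ) * ((r : ℝ) - (n : ℝ)) := by
    have := Nat.choose_succ_right_eq r n
    have h2 := congrArg (fun m : ℕ => (m : ℝ)) this
    push_cast [Nat.cast_sub hnr] at h2
    linarith
  -- value of c (n+1)
  rcases lt_or_eq_of_le hnr with hlt | heq
  · -- n < r
    have hc1 : c ((n : ℤ) + 1) t
        = (-1 : ℝ) ^ (n + 1) * (r.choose (n + 1) : ℝ) * Real.cosh t ^ ((n : ℤ) + 1 + s) := by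
      rw [hc]
      have : (0 : ℤ) ≤ (n : ℤ) + 1 ∧ (n : ℤ) + 1 ≤ (r : ℤ) := by
        constructor <;> omega
      simp only [this, if_true]
      norm_num [show ((n : ℤ) + 1).toNat = n + 1 by omega]
    rw [hc1, hct, hd, htanh, e1, e2, hA]
    have hpow : (-1 : ℝ) ^ (n + 1) = -(-1 : ℝ) ^ n := by ring
    rw [hpow]
    have hsc : ((((n : ℤ) + s : ℤ) : ℝ)) = (n : ℝ) + (s : ℝ) := by push_cast; ring
    rw [hsc]
    have hn1 : ((n : ℝ) + 1) ≠ 0 := by positivity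
    have hC1 : (r.choose (n + 1) : ℝ) = (r.choose n : ℝ) * ((r : ℝ) - (n : ℝ)) / ((n : ℝ) + 1) := by
      field_simp
      linarith [hbin]
    rw [hC1]
    constructor
    · field_simp
      push_cast
      ring
    · field_simp
      push_cast
      ring
  · -- n = r
    subst heq
    have hc1 : c ((n : ℤ) + 1) t = 0 := by
      rw [hc]
      have : ¬ ((0 : ℤ) ≤ (n : ℤ) + 1 ∧ (n : ℤ) + 1 ≤ (n : ℤ)) := by omega
      simp [this]
    rw [hc1, hct, hd, htanh, e1]
    have hsc : ((((n : ℤ) + s : ℤ) : ℝ)) = (n : ℝ) + (s : ℝ) := by push_cast; ring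
    rw [hsc]
    constructor
    · field_simp
      push_cast
      ring
    · simp
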